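/- For any graph G and any k ≥ 1, min{|V(G)|, γ(G)+k−2} ≤ γ_{rk}(G) ≤ k·γ(G). -/

import Mathlib

open Finset

/-- A `k`-rainbow dominating function: every vertex assigned `∅` sees all `k` colors
among its neighbors. -/
def SimpleGraph.IsRainbowDF {V : Type*} {k : ℕ} (G : SimpleGraph V)
    (f : V → Finset (Fin k)) : Prop :=
  ∀ v, f v = ∅ → ∀ c : Fin k, ∃ u, G.Adj v u ∧ c ∈ f u

/-- The `k`-rainbow domination number. -/
noncomputable def SimpleGraph.rainbowNum {V : Type*} [Fintype V] (G : SimpleGraph V)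
    (k : ℕ) : ℕ :=
  sInf {w | ∃ f : V → Finset (Fin k), G.IsRainbowDF f ∧ w = ∑ v, (f v).card}

/-- `S` is a dominating set of `G`. -/
def SimpleGraph.IsDomSet {V : Type*} (G : SimpleGraph V) (S : Set V) : Prop :=
  ∀ v, v ∉ S → ∃ u ∈ S, G.Adj v u

/-- The domination number. -/
noncomputable def SimpleGraph.domNum {V : Type*} [Fintype V] (G : SimpleGraph V) : ℕ :=
  sInf {n | ∃ S : Finset V, G.IsDomSet ↑S ∧ n = S.card}

lemma rainbow_upper {V : Type*} [Fintype V] (G : SimpleGraph V) (k : ℕ) (hk : 1 ≤ k) :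
    G.rainbowNum k ≤ k * G.domNum := by
  classical
  have hne : G.domNum ∈ {n | ∃ S : Finset V, G.IsDomSet ↑S ∧ n = S.card} := by
    apply Nat.sInf_mem
    exact ⟨(Finset.univ : Finset V).card, Finset.univ,
      fun v hv => absurd (by simp) hv, rfl⟩
  obtain ⟨S, hS, hcard⟩ := hne
  set f : V → Finset (Fin k) := fun v => if v ∈ S then (Finset.univ : Finset (Fin k)) else ∅
    with hf
  have hrdf : G.IsRainbowDF f := by
    intro v hv c
    have hvS : v ∉ S := by
      intro h
      simp only [hf, if_pos h] at hv
      have : c ∈ (Finset.univ : Finset (Fin k)) := Finset.mem_univ c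
      rw [hv] at this
      exact absurd this (Finset.notMem_empty c)
    obtain ⟨u, huS, hadj⟩ := hS v hvS
    exact ⟨u, hadj, by simp [hf, Finset.mem_coe.mp huS]⟩
  have hle : G.rainbowNum k ≤ ∑ v, (f v).card := Nat.sInf_le ⟨f, hrdf, rfl⟩
  have hsum : ∑ v, (f v).card = k * S.card := by
    have : ∀ v, (f v).card = if v ∈ S then k else 0 := by
      intro v; by_cases h : v ∈ S <;> simp [hf, h]
    simp only [this]
    rw [Finset.sum_ite_mem, Finset.univ_inter, Finset.sum_const, smul_eq_mul, mul_comm]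
  rw [hsum] at hle
  rw [hcard]
  exact hle

lemma rainbow_lower {V : Type*} [Fintype V] (G : SimpleGraph V) (k : ℕ) (hk : 1 ≤ k) :
    min (Fintype.card V) (G.domNum + k - 2) ≤ G.rainbowNum k := by
  classical
  have hne : G.rainbowNum k ∈
      {w | ∃ f : V → Finset (Fin k), G.IsRainbowDF f ∧ w = ∑ v, (f v).card} := by
    apply Nat.sInf_mem
    refine ⟨∑ v : V, (Finset.univ : Finset (Fin k)).card, fun _ => Finset.univ, ?_, rfl⟩
    intro v hv c
    exfalso
    haveI : Nonempty (Fin k) := ⟨⟨0, hk⟩⟩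
    have hv' : (Finset.univ : Finset (Fin k)) = ∅ := hv
    exact Finset.univ_nonempty.ne_empty hv'
  obtain ⟨f, hf, hw⟩ := hne
  set w := ∑ v, (f v).card with hwdef
  by_cases hV0 : ∀ v, f v ≠ ∅
  · -- every vertex nonempty : w ≥ |V|
    have : Fintype.card V ≤ w := by
      rw [← Finset.card_univ, Finset.card_eq_sum_ones]
      exact Finset.sum_le_sum fun v _ =>
        Finset.card_pos.mpr (Finset.nonempty_iff_ne_empty.mpr (hV0 v))
    rw [hw]
    exact le_trans (min_le_left _ _) this
  push_neg at hV0
  obtain ⟨v0, hv0⟩ := hV0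
  set S : Finset V := Finset.univ.filter (fun v => f v ≠ ∅) with hSdef
  have hmemS : ∀ v, v ∈ S ↔ f v ≠ ∅ := by intro v; simp [hSdef]
  have hposS : ∀ v ∈ S, 1 ≤ (f v).card := fun v hv =>
    Finset.card_pos.mpr (Finset.nonempty_iff_ne_empty.mpr ((hmemS v).mp hv))
  have hwS : w = ∑ v ∈ S, (f v).card := by
    rw [hwdef]
    symm
    apply Finset.sum_subset (Finset.subset_univ S)
    intro x _ hx
    have : f x = ∅ := by
      by_contra h
      exact hx ((hmemS x).mpr h)
    rw [this]; simp
  have hsw : S.card ≤ w := by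
    rw [hwS, Finset.card_eq_sum_ones]
    exact Finset.sum_le_sum hposS
  -- the excess
  set e := w - S.card with hedef
  have hwe : w = S.card + e := by omega
  -- excess identity: for any T ⊆ S, ∑_{T} card ≤ T.card + e
  have hexcess : ∀ T : Finset V, T ⊆ S → ∑ v ∈ T, (f v).card ≤ T.card + e := by
    intro T hT
    have h1 : ∑ v ∈ T, (f v).card = T.card + ∑ v ∈ T, ((f v).card - 1) := by
      rw [Finset.card_eq_sum_ones, ← Finset.sum_add_distrib]
      apply Finset.sum_congr rfl
      intro v hv
      have := hposS v (hT hv)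
      omega
    have h2 : ∑ v ∈ T, ((f v).card - 1) ≤ ∑ v ∈ S, ((f v).card - 1) :=
      Finset.sum_le_sum_of_subset hT
    have h3 : ∑ v ∈ S, ((f v).card - 1) + S.card = w := by
      rw [hwS, Finset.card_eq_sum_ones, ← Finset.sum_add_distrib]
      apply Finset.sum_congr rfl
      intro v hv
      have := hposS v hv
      omega
    omega
  -- neighborhood of an empty vertex carries all colors
  have hnbr : ∀ v, f v = ∅ →
      k ≤ (Finset.univ.filter (fun u => G.Adj v u ∧ f u ≠ ∅)).card + e := by
    intro v hv
    set T := Finset.univ.filter (fun u => G.Adj v u ∧ f u ≠ ∅) with hTdef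
    have hTS : T ⊆ S := by
      intro u hu
      rw [hmemS]
      exact (Finset.mem_filter.mp hu).2.2
    have hcover : (Finset.univ : Finset (Fin k)) ⊆ T.biUnion (fun u => f u) := by
      intro c _
      obtain ⟨u, hadj, hcu⟩ := hf v hv c
      refine Finset.mem_biUnion.mpr ⟨u, ?_, hcu⟩
      rw [hTdef, Finset.mem_filter]
      exact ⟨Finset.mem_univ u, hadj, fun h => by rw [h] at hcu; exact absurd hcu (Finset.notMem_empty c)⟩
    have hk1 : k ≤ ∑ u ∈ T, (f u).card := by
      calc k = (Finset.univ : Finset (Fin k)).card := by simp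
        _ ≤ (T.biUnion (fun u => f u)).card := Finset.card_le_card hcover
        _ ≤ ∑ u ∈ T, (f u).card := Finset.card_biUnion_le
    have := hexcess T hTS
    omega
  -- S dominates
  have hSdom : G.IsDomSet ↑S := by
    intro v hv
    have hveq : f v = ∅ := by
      by_contra h
      exact hv (by simpa using (hmemS v).mpr h)
    obtain ⟨u, hadj, hcu⟩ := hf v hveq ⟨0, hk⟩
    refine ⟨u, ?_, hadj⟩
    simp only [Finset.coe_filter, Set.mem_setOf_eq, hSdef]
    exact ⟨Finset.mem_univ u, fun h => by rw [h] at hcu; exact absurd hcu (Finset.notMem_empty _)⟩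
  have hγS : G.domNum ≤ S.card := Nat.sInf_le ⟨S, hSdom, rfl⟩
  rw [hw]
  refine le_trans (min_le_right _ _) ?_
  by_cases hek : k ≤ e + 1
  · omega
  · -- e + 2 ≤ k : shrink the dominating set
    push_neg at hek
    set T0 := Finset.univ.filter (fun u => G.Adj v0 u ∧ f u ≠ ∅) with hT0def
    have hT0S : T0 ⊆ S := by
      intro u hu
      rw [hmemS]
      exact (Finset.mem_filter.mp hu).2.2
    have hm : k ≤ T0.card + e := hnbr v0 hv0
    obtain ⟨R, hRT0, hRcard⟩ := Finset.exists_subset_card_eq (s := T0) (n := k - e - 1) (by omega)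
    have hRS : R ⊆ S := hRT0.trans hT0S
    set D : Finset V := insert v0 (S \ R) with hDdef
    have hDdom : G.IsDomSet ↑D := by
      intro x hx
      have hxD : x ∉ D := by simpa using hx
      have hxv0 : x ≠ v0 := fun h => hxD (by rw [h, hDdef]; exact Finset.mem_insert_self _ _)
      by_cases hfx : f x = ∅
      · -- x is an empty vertex ≠ v0 : it has a neighbor in S outside R
        set Tx := Finset.univ.filter (fun u => G.Adj x u ∧ f u ≠ ∅) with hTxdef
        have hmx : k ≤ Tx.card + e := hnbr x hfx
        have : ¬ Tx ⊆ R := by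
          intro h
          have := Finset.card_le_card h
          omega
        obtain ⟨u, huTx, huR⟩ := Finset.not_subset.mp this
        have huS : u ∈ S := by
          rw [hmemS]
          exact (Finset.mem_filter.mp huTx).2.2
        refine ⟨u, ?_, (Finset.mem_filter.mp huTx).2.1⟩
        simp only [hDdef, Finset.coe_insert, Set.mem_insert_iff, Finset.coe_sdiff,
          Set.mem_diff, Finset.mem_coe]
        exact Or.inr ⟨huS, huR⟩
      · -- x ∈ S, so x ∈ R ⊆ N(v0)
        have hxS : x ∈ S := (hmemS x).mpr hfx
        have hxR : x ∈ R := by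
          by_contra h
          exact hxD (by rw [hDdef]; exact Finset.mem_insert_of_mem (Finset.mem_sdiff.mpr ⟨hxS, h⟩))
        have hadj : G.Adj v0 x := (Finset.mem_filter.mp (hRT0 hxR)).2.1
        refine ⟨v0, ?_, hadj.symm⟩
        simp [hDdef]
    have hγD : G.domNum ≤ D.card := Nat.sInf_le ⟨D, hDdom, rfl⟩
    have hDcard : D.card ≤ S.card - R.card + 1 := by
      rw [hDdef]
      calc (insert v0 (S \ R)).card ≤ (S \ R).card + 1 := Finset.card_insert_le _ _
        _ = S.card - R.card + 1 := by rw [Finset.card_sdiff_of_subset hRS]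
    have hT0card : T0.card ≤ S.card := Finset.card_le_card hT0S
    omega

/-- `min{|V(G)|, γ(G)+k−2} ≤ γ_{rk}(G) ≤ k·γ(G)` for `k ≥ 1`. -/
theorem min_card_domNum_le_rainbowNum_le {V : Type*} [Fintype V] (G : SimpleGraph V)
    (k : ℕ) (hk : 1 ≤ k) :
    min (Fintype.card V) (G.domNum + k - 2) ≤ G.rainbowNum k ∧
      G.rainbowNum k ≤ k * G.domNum := by
  exact ⟨rainbow_lower G k hk, rainbow_upper G k hk⟩
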